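/- Let V = C[x_i(m,n) : 2 ≤ i ≤ l, (m,n) ∈ Z²] and for 2 ≤ i,j ≤ l define operators e_{ij}(m1,n1) = Σ_{(m,n)∈Z²} q^{m n1} x_i(m1+m, n1+n) ∂/∂x_j(m,n) on V. Then for all 2 ≤ i,j,k,r ≤ l and integers m1,n1,m2,n2: [e_{ij}(m1,n1), e_{kr}(m2,n2)] = δ_{jk} q^{m2 n1} e_{ir}(m1+m2, n1+n2) − δ_{ir} q^{m1 n2} e_{kj}(m1+m2, n1+n2). -/

import Mathlib

open MvPolynomial

/-- Index set `{2, …, l}` for the variables. -/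
abbrev Idx (l : ℕ) := {i : ℕ // 2 ≤ i ∧ i ≤ l}

/-- The polynomial ring `V = ℂ[x_i(m,n) : 2 ≤ i ≤ l, (m,n) ∈ ℤ²]`. -/
abbrev V (l : ℕ) := MvPolynomial (Idx l × ℤ × ℤ) ℂ

/-- `e_{ij}(m1,n1) = Σ_{(m,n)} q^{m n1} x_i(m1+m, n1+n) ∂/∂x_j(m,n)`, for `2 ≤ i,j ≤ l`. -/
noncomputable def eGen (l : ℕ) (q : ℂ) (i j : Idx l) (m1 n1 : ℤ) (p : V l) : V l :=
  ∑ᶠ mn : ℤ × ℤ,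
    q ^ (mn.1 * n1) • (X (i, m1 + mn.1, n1 + mn.2) * pderiv (j, mn.1, mn.2) p)

/-- `e_{i1}(m,n)` = multiplication by the variable `x_i(m,n)`. -/
noncomputable def eLow (l : ℕ) (i : Idx l) (m n : ℤ) (p : V l) : V l :=
  X (i, m, n) * p

/-- `e_{11}(m1,n1) = μ δ_{(m1,n1),(0,0)} − Σ_{j=2}^l Σ_{(m,n)} q^{n m1} x_j(m1+m, n1+n) ∂/∂x_j(m,n)`. -/
noncomputable def e11 (l : ℕ) (q μ : ℂ) (m1 n1 : ℤ) (p : V l) : V l :=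
  (if (m1, n1) = ((0 : ℤ), (0 : ℤ)) then μ else 0) • p
  - ∑ᶠ j : Idx l, ∑ᶠ mn : ℤ × ℤ,
      q ^ (mn.2 * m1) • (X (j, m1 + mn.1, n1 + mn.2) * pderiv (j, mn.1, mn.2) p)

/-- `e_{1i}(m1,n1) = q^{−m1 n1} μ ∂/∂x_i(−m1,−n1)
  − Σ_{j=2}^l Σ_{(m,n),(m',n')} q^{n1 m' + n m1 + n m'}
      x_j(m1+m+m', n1+n+n') ∂/∂x_j(m,n) ∂/∂x_i(m',n')`, for `2 ≤ i ≤ l`. -/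
noncomputable def eUp (l : ℕ) (q μ : ℂ) (i : Idx l) (m1 n1 : ℤ) (p : V l) : V l :=
  q ^ (-(m1 * n1)) • μ • pderiv (i, -m1, -n1) p
  - ∑ᶠ j : Idx l, ∑ᶠ mm : (ℤ × ℤ) × (ℤ × ℤ),
      q ^ (n1 * mm.2.1 + mm.1.2 * m1 + mm.1.2 * mm.2.1) •
        (X (j, m1 + mm.1.1 + mm.2.1, n1 + mm.1.2 + mm.2.2) *
          pderiv (j, mm.1.1, mm.1.2) (pderiv (i, mm.2.1, mm.2.2) p))

/-- Degree operator `D1 = Σ_{i=2}^l Σ_{(m,n)} m · x_i(m,n) ∂/∂x_i(m,n)`. -/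
noncomputable def D1 (l : ℕ) (p : V l) : V l :=
  ∑ᶠ i : Idx l, ∑ᶠ mn : ℤ × ℤ,
    (mn.1 : ℂ) • (X (i, mn.1, mn.2) * pderiv (i, mn.1, mn.2) p)

/-- Degree operator `D2 = Σ_{i=2}^l Σ_{(m,n)} n · x_i(m,n) ∂/∂x_i(m,n)`. -/
noncomputable def D2 (l : ℕ) (p : V l) : V l :=
  ∑ᶠ i : Idx l, ∑ᶠ mn : ℤ × ℤ,
    (mn.2 : ℂ) • (X (i, mn.1, mn.2) * pderiv (i, mn.1, mn.2) p)

/-- Commutator `[A,B] = A∘B − B∘A` of operators on `V`. -/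
noncomputable def oComm {l : ℕ} (A B : V l → V l) : V l → V l := fun p => A (B p) - B (A p)


section auxStmt3

variable {σ : Type*} [DecidableEq σ]

omit [DecidableEq σ] in
lemma pderiv_comm' (a b : σ) (p : MvPolynomial σ ℂ) :
    pderiv a (pderiv b p) = pderiv b (pderiv a p) := by
  classical
  induction p using MvPolynomial.induction_on' with
  | monomial s c =>
    rcases eq_or_ne a b with rfl | hab
    · rfl
    · simp only [pderiv_monomial]
      have h1 : ((s - Finsupp.single b 1 : σ →₀ ℕ)) a = s a := by
        rw [Finsupp.tsub_apply]
        simp [Finsupp.single_apply, Ne.symm hab]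
      have h2 : ((s - Finsupp.single a 1 : σ →₀ ℕ)) b = s b := by
        rw [Finsupp.tsub_apply]
        simp [Finsupp.single_apply, hab]
      rw [h1, h2, tsub_tsub, tsub_tsub, add_comm (Finsupp.single b 1), mul_right_comm]
  | add p q hp hq => simp [hp, hq]

lemma vars_pderiv (a : σ) (p : MvPolynomial σ ℂ) : (pderiv a p).vars ⊆ p.vars := by
  classical
  intro x hx
  rw [p.as_sum, map_sum] at hx
  have hx2 := vars_sum_subset p.support (fun d => pderiv a (monomial d (coeff d p))) hx
  simp only [Finset.mem_biUnion] at hx2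
  obtain ⟨d, hd, hxd⟩ := hx2
  have hsub : (pderiv a (monomial d (coeff d p))).vars ⊆ d.support := by
    rw [pderiv_monomial]
    by_cases hc : (coeff d p * (d a : ℂ)) = 0
    · simp [hc]
    · rw [vars_monomial hc]
      exact Finsupp.support_tsub
  exact (mem_vars x).2 ⟨d, hd, hsub hxd⟩

lemma vars_smul_X_mul (c : ℂ) (a : σ) (d : MvPolynomial σ ℂ) :
    (c • (X a * d)).vars ⊆ insert a d.vars := by
  classical
  rcases eq_or_ne c 0 with rfl | hc
  · simp
  · rw [smul_eq_C_mul, vars_C_mul _ hc]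
    refine (vars_mul _ _).trans ?_
    rw [vars_X, Finset.insert_eq]

end auxStmt3

lemma eGen_eq_sum (l : ℕ) (q : ℂ) (i j : Idx l) (m1 n1 : ℤ) (p : V l)
    {T : Finset (ℤ × ℤ)} (hT : ∀ m : ℤ × ℤ, (j, m.1, m.2) ∈ p.vars → m ∈ T) :
    eGen l q i j m1 n1 p
      = ∑ m ∈ T, q ^ (m.1 * n1) • (X (i, m1 + m.1, n1 + m.2) * pderiv (j, m.1, m.2) p) := by
  refine finsum_eq_finset_sum_of_support_subset _ ?_
  intro m hm
  simp only [Function.mem_support] at hm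
  have hp : pderiv ((j, m.1, m.2) : Idx l × ℤ × ℤ) p ≠ 0 := by
    intro h
    apply hm
    rw [h, mul_zero, smul_zero]
  have hv : ((j, m.1, m.2) : Idx l × ℤ × ℤ) ∈ p.vars := by
    by_contra hv
    exact hp (pderiv_eq_zero_of_notMem_vars hv)
  exact Finset.mem_coe.2 (hT m hv)

lemma eGen_comp_eq (l : ℕ) (q : ℂ) (i j k r : Idx l) (m1 n1 m2 n2 : ℤ) (p : V l)
    (T : Finset (ℤ × ℤ))
    (hv : ∀ (a : Idx l) (m : ℤ × ℤ), (a, m.1, m.2) ∈ p.vars → m ∈ T)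
    (hs : ∀ m : ℤ × ℤ, ((r, m.1, m.2) : Idx l × ℤ × ℤ) ∈ p.vars → (m2 + m.1, n2 + m.2) ∈ T) :
    eGen l q i j m1 n1 (eGen l q k r m2 n2 p)
      = (∑ m ∈ T, ∑ m' ∈ T,
          if ((k, m2 + m'.1, n2 + m'.2) : Idx l × ℤ × ℤ) = (j, m.1, m.2) then
            (q ^ (m.1 * n1) * q ^ (m'.1 * n2)) •
              (X (i, m1 + m.1, n1 + m.2) * pderiv (r, m'.1, m'.2) p)
          else 0)
        + ∑ m ∈ T, ∑ m' ∈ T,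
            (q ^ (m.1 * n1) * q ^ (m'.1 * n2)) •
              (X (i, m1 + m.1, n1 + m.2) * (X (k, m2 + m'.1, n2 + m'.2) *
                pderiv (j, m.1, m.2) (pderiv (r, m'.1, m'.2) p))) := by
  classical
  have hB := eGen_eq_sum l q k r m2 n2 p (T := T) (fun m hm => hv r m hm)
  have hmemv : ∀ m : ℤ × ℤ,
      ((j, m.1, m.2) : Idx l × ℤ × ℤ) ∈ (eGen l q k r m2 n2 p).vars → m ∈ T := by
    intro m hm
    rw [hB] at hm
    have h2 := vars_sum_subset T
      (fun m' => q ^ (m'.1 * n2) • (X (k, m2 + m'.1, n2 + m'.2) * pderiv ((r, m'.1, m'.2) : Idx l × ℤ × ℤ) p)) hm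
    simp only [Finset.mem_biUnion] at h2
    obtain ⟨m', hm'T, hmem⟩ := h2
    by_cases hz : pderiv ((r, m'.1, m'.2) : Idx l × ℤ × ℤ) p = 0
    · rw [hz, mul_zero, smul_zero] at hmem
      simp at hmem
    · have hvr : ((r, m'.1, m'.2) : Idx l × ℤ × ℤ) ∈ p.vars := by
        by_contra hc
        exact hz (pderiv_eq_zero_of_notMem_vars hc)
      have h3 := vars_smul_X_mul (q ^ (m'.1 * n2)) ((k, m2 + m'.1, n2 + m'.2) : Idx l × ℤ × ℤ)
        (pderiv ((r, m'.1, m'.2) : Idx l × ℤ × ℤ) p) hmem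
      rcases Finset.mem_insert.1 h3 with h | h
      · have hm2 : m = (m2 + m'.1, n2 + m'.2) := congrArg Prod.snd h
        rw [hm2]
        exact hs m' hvr
      · exact hv j m (vars_pderiv _ _ h)
  rw [eGen_eq_sum l q i j m1 n1 _ hmemv, hB, ← Finset.sum_add_distrib]
  refine Finset.sum_congr rfl fun m _ => ?_
  rw [map_sum, Finset.mul_sum, Finset.smul_sum, ← Finset.sum_add_distrib]
  refine Finset.sum_congr rfl fun m' _ => ?_
  rw [Derivation.map_smul, pderiv_mul, pderiv_X, Pi.single_apply]
  rw [mul_smul_comm, smul_smul, mul_add, smul_add]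
  congr 1
  rcases eq_or_ne ((k, m2 + m'.1, n2 + m'.2) : Idx l × ℤ × ℤ) ((j, m.1, m.2) : Idx l × ℤ × ℤ) with h | h
  · rw [if_pos h, if_pos h, one_mul]
  · rw [if_neg h, if_neg h, zero_mul, mul_zero, smul_zero]

theorem stmt3 (l : ℕ) (hl : 2 ≤ l) (q : ℂ) (hq : q ≠ 0)
    (i j k r : Idx l) (m1 n1 m2 n2 : ℤ) :
    oComm (eGen l q i j m1 n1) (eGen l q k r m2 n2) = fun p =>
      (if j = k then q ^ (m2 * n1) else 0) • eGen l q i r (m1 + m2) (n1 + n2) p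
      - (if i = r then q ^ (m1 * n2) else 0) • eGen l q k j (m1 + m2) (n1 + n2) p := by
  classical
  funext p
  set Sp : Finset (ℤ × ℤ) := p.vars.image (fun v => v.2) with hSpdef
  set T : Finset (ℤ × ℤ) :=
    (Sp ∪ Sp.image (fun v => (m1 + v.1, n1 + v.2))) ∪ Sp.image (fun v => (m2 + v.1, n2 + v.2))
    with hTdef
  have hSpT : Sp ⊆ T := fun x hx =>
    Finset.mem_union.2 (Or.inl (Finset.mem_union.2 (Or.inl hx)))
  have hv : ∀ (a : Idx l) (m : ℤ × ℤ), ((a, m.1, m.2) : Idx l × ℤ × ℤ) ∈ p.vars → m ∈ T := by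
    intro a m hm
    exact hSpT (Finset.mem_image.2 ⟨(a, m.1, m.2), hm, rfl⟩)
  have hmemSp : ∀ (a : Idx l) (m : ℤ × ℤ),
      ((a, m.1, m.2) : Idx l × ℤ × ℤ) ∈ p.vars → m ∈ Sp := by
    intro a m hm
    exact Finset.mem_image.2 ⟨(a, m.1, m.2), hm, rfl⟩
  have hs2 : ∀ m : ℤ × ℤ, ((r, m.1, m.2) : Idx l × ℤ × ℤ) ∈ p.vars → (m2 + m.1, n2 + m.2) ∈ T :=
    fun m hm => Finset.mem_union.2 (Or.inr (Finset.mem_image.2 ⟨m, hmemSp r m hm, rfl⟩))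
  have hs1 : ∀ m : ℤ × ℤ, ((j, m.1, m.2) : Idx l × ℤ × ℤ) ∈ p.vars → (m1 + m.1, n1 + m.2) ∈ T :=
    fun m hm => Finset.mem_union.2 (Or.inl (Finset.mem_union.2 (Or.inr
      (Finset.mem_image.2 ⟨m, hmemSp j m hm, rfl⟩))))
  have h1 := eGen_comp_eq l q i j k r m1 n1 m2 n2 p T hv hs2
  have h2 := eGen_comp_eq l q k r i j m2 n2 m1 n1 p T hv hs1
  have hG : (∑ m ∈ T, ∑ m' ∈ T,
        (q ^ (m.1 * n1) * q ^ (m'.1 * n2)) •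
          (X (i, m1 + m.1, n1 + m.2) * (X (k, m2 + m'.1, n2 + m'.2) *
            pderiv ((j, m.1, m.2) : Idx l × ℤ × ℤ) (pderiv (r, m'.1, m'.2) p))))
      = ∑ m ∈ T, ∑ m' ∈ T,
          (q ^ (m.1 * n2) * q ^ (m'.1 * n1)) •
            (X (k, m2 + m.1, n2 + m.2) * (X (i, m1 + m'.1, n1 + m'.2) *
              pderiv ((r, m.1, m.2) : Idx l × ℤ × ℤ) (pderiv (j, m'.1, m'.2) p))) := by
    rw [Finset.sum_comm]
    refine Finset.sum_congr rfl fun m _ => Finset.sum_congr rfl fun m' _ => ?_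
    rw [pderiv_comm', mul_left_comm, mul_comm (q ^ (m'.1 * n1))]
  have hD1 : (∑ m ∈ T, ∑ m' ∈ T,
        if ((k, m2 + m'.1, n2 + m'.2) : Idx l × ℤ × ℤ) = (j, m.1, m.2) then
          (q ^ (m.1 * n1) * q ^ (m'.1 * n2)) •
            (X (i, m1 + m.1, n1 + m.2) * pderiv ((r, m'.1, m'.2) : Idx l × ℤ × ℤ) p)
        else 0)
      = (if j = k then q ^ (m2 * n1) else 0) • eGen l q i r (m1 + m2) (n1 + n2) p := by
    rw [Finset.sum_comm, eGen_eq_sum l q i r (m1 + m2) (n1 + n2) p (T := T)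
      (fun m hm => hv r m hm)]
    rcases eq_or_ne j k with rfl | hjk
    · rw [if_pos rfl, Finset.smul_sum]
      refine Finset.sum_congr rfl fun m' _ => ?_
      by_cases hz : pderiv ((r, m'.1, m'.2) : Idx l × ℤ × ℤ) p = 0
      · rw [hz]
        simp
      · have hvr : ((r, m'.1, m'.2) : Idx l × ℤ × ℤ) ∈ p.vars := by
          by_contra hc
          exact hz (pderiv_eq_zero_of_notMem_vars hc)
        rw [Finset.sum_eq_single ((m2 + m'.1, n2 + m'.2) : ℤ × ℤ)]
        · rw [if_pos rfl, smul_smul, ← zpow_add₀ hq, ← zpow_add₀ hq]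
          have e1 : (m2 + m'.1) * n1 + m'.1 * n2 = m2 * n1 + m'.1 * (n1 + n2) := by ring
          have e2 : m1 + (m2 + m'.1) = m1 + m2 + m'.1 := by ring
          have e3 : n1 + (n2 + m'.2) = n1 + n2 + m'.2 := by ring
          rw [e1, e2, e3]
        · intro b _ hne
          rw [if_neg]
          intro hc
          apply hne
          have hsnd := (Prod.ext_iff.1 hc).2
          exact Prod.ext (Prod.ext_iff.1 hsnd).1.symm (Prod.ext_iff.1 hsnd).2.symm
        · intro hnotin
          exact absurd (hs2 m' hvr) hnotin
    · rw [if_neg hjk, zero_smul]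
      refine Finset.sum_eq_zero fun m' _ => Finset.sum_eq_zero fun m _ => ?_
      rw [if_neg]
      intro hc
      exact hjk (congrArg Prod.fst hc).symm
  have hD2 : (∑ m ∈ T, ∑ m' ∈ T,
        if ((i, m1 + m'.1, n1 + m'.2) : Idx l × ℤ × ℤ) = (r, m.1, m.2) then
          (q ^ (m.1 * n2) * q ^ (m'.1 * n1)) •
            (X (k, m2 + m.1, n2 + m.2) * pderiv ((j, m'.1, m'.2) : Idx l × ℤ × ℤ) p)
        else 0)
      = (if i = r then q ^ (m1 * n2) else 0) • eGen l q k j (m1 + m2) (n1 + n2) p := by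
    rw [Finset.sum_comm, eGen_eq_sum l q k j (m1 + m2) (n1 + n2) p (T := T)
      (fun m hm => hv j m hm)]
    rcases eq_or_ne i r with rfl | hir
    · rw [if_pos rfl, Finset.smul_sum]
      refine Finset.sum_congr rfl fun m' _ => ?_
      by_cases hz : pderiv ((j, m'.1, m'.2) : Idx l × ℤ × ℤ) p = 0
      · rw [hz]
        simp
      · have hvj : ((j, m'.1, m'.2) : Idx l × ℤ × ℤ) ∈ p.vars := by
          by_contra hc
          exact hz (pderiv_eq_zero_of_notMem_vars hc)
        rw [Finset.sum_eq_single ((m1 + m'.1, n1 + m'.2) : ℤ × ℤ)]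
        · rw [if_pos rfl, smul_smul, ← zpow_add₀ hq, ← zpow_add₀ hq]
          have e1 : (m1 + m'.1) * n2 + m'.1 * n1 = m1 * n2 + m'.1 * (n1 + n2) := by ring
          have e2 : m2 + (m1 + m'.1) = m1 + m2 + m'.1 := by ring
          have e3 : n2 + (n1 + m'.2) = n1 + n2 + m'.2 := by ring
          rw [e1, e2, e3]
        · intro b _ hne
          rw [if_neg]
          intro hc
          apply hne
          have hsnd := (Prod.ext_iff.1 hc).2
          exact Prod.ext (Prod.ext_iff.1 hsnd).1.symm (Prod.ext_iff.1 hsnd).2.symm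
        · intro hnotin
          exact absurd (hs1 m' hvj) hnotin
    · rw [if_neg hir, zero_smul]
      refine Finset.sum_eq_zero fun m' _ => Finset.sum_eq_zero fun m _ => ?_
      rw [if_neg]
      intro hc
      exact hir (congrArg Prod.fst hc)
  show eGen l q i j m1 n1 (eGen l q k r m2 n2 p)
      - eGen l q k r m2 n2 (eGen l q i j m1 n1 p) = _
  rw [h1, h2, hG, hD1, hD2]
  abel
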